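/- In ℂ[x,y], the quotient of ℂ[x,y] by the ideal (x^2+y^2, x^3, x^2y) has ℂ-vector space dimension 5. -/

import Mathlib

open MvPolynomial

namespace Aux13

noncomputable section

abbrev R := MvPolynomial (Fin 2) ℂ

def I : Ideal R := Ideal.span {(X 0 : R) ^ 2 + X 1 ^ 2, X 0 ^ 3, X 0 ^ 2 * X 1}

def e : Fin 5 → (Fin 2 →₀ ℕ) :=
  ![0, Finsupp.single 0 1, Finsupp.single 1 1,
    Finsupp.single 0 1 + Finsupp.single 1 1, Finsupp.single 1 2]

def m : Fin 5 → R := fun i => monomial (e i) 1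

def ψ : R →ₗ[ℂ] (Fin 5 → ℂ) where
  toFun p := fun i => coeff (e i) p - (if i = 4 then coeff (Finsupp.single 0 2) p else 0)
  map_add' p q := by funext i; by_cases h : i = 4 <;> simp [h, coeff_add] <;> ring
  map_smul' c p := by funext i; by_cases h : i = 4 <;> simp [h, coeff_smul, smul_eq_mul] <;> ring

lemma ψ_mul_g1 (f : R) : ψ (f * ((X 0 : R) ^ 2 + X 1 ^ 2)) = 0 := by
  have h0 : ((X 0 : R) ^ 2) = monomial (Finsupp.single 0 2) 1 := X_pow_eq_monomial
  have h1 : ((X 1 : R) ^ 2) = monomial (Finsupp.single 1 2) 1 := X_pow_eq_monomial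
  funext i
  fin_cases i <;>
    simp [ψ, mul_add, h0, h1, coeff_mul_monomial', e, Finsupp.single_le_iff,
      Finsupp.single_apply] <;> ring

lemma ψ_mul_g2 (f : R) : ψ (f * ((X 0 : R) ^ 3)) = 0 := by
  have h0 : ((X 0 : R) ^ 3) = monomial (Finsupp.single 0 3) 1 := X_pow_eq_monomial
  funext i
  fin_cases i <;>
    simp [ψ, h0, coeff_mul_monomial', e, Finsupp.single_le_iff, Finsupp.single_apply]

lemma ψ_mul_g3 (f : R) : ψ (f * ((X 0 : R) ^ 2 * X 1)) = 0 := by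
  have h0 : ((X 0 : R) ^ 2 * X 1) = monomial (Finsupp.single 0 2 + Finsupp.single 1 1) 1 := by
    rw [X_pow_eq_monomial, X, monomial_mul, mul_one]
  funext i
  fin_cases i <;>
    simp [ψ, h0, coeff_mul_monomial', e, Finsupp.le_def, Finsupp.add_apply,
      Finsupp.single_apply, Fin.forall_fin_two]

lemma ψ_vanish : ∀ p ∈ I, ψ p = 0 := by
  intro p hp
  rw [I, Ideal.mem_span_insert] at hp
  obtain ⟨a, z, hz, rfl⟩ := hp
  rw [Ideal.mem_span_insert] at hz
  obtain ⟨b, w, hw, rfl⟩ := hz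
  rw [Ideal.mem_span_singleton] at hw
  obtain ⟨c, rfl⟩ := hw
  rw [mul_comm ((X 0 : R) ^ 2 * X 1) c]
  simp [map_add, ψ_mul_g1, ψ_mul_g2, ψ_mul_g3]

lemma ψ_m (j : Fin 5) : ψ (m j) = Pi.single j 1 := by
  fin_cases j <;> (funext i; fin_cases i) <;>
    simp [ψ, m, e, coeff_monomial, coeff_one, Finsupp.ext_iff, Finsupp.single_apply,
      Fin.forall_fin_two, Pi.single_apply]

def bb : Fin 5 → (R ⧸ I) := fun j => Ideal.Quotient.mkₐ ℂ I (m j)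

lemma bb_li : LinearIndependent ℂ bb := by
  rw [Fintype.linearIndependent_iff]
  intro c hc j
  have h : (∑ i, c i • m i) ∈ I := by
    rw [← Ideal.Quotient.eq_zero_iff_mem]
    have : Ideal.Quotient.mk I (∑ i, c i • m i)
        = ∑ i, c i • Ideal.Quotient.mkₐ ℂ I (m i) := by
      rw [show (Ideal.Quotient.mk I : R → R ⧸ I) (∑ i, c i • m i)
          = Ideal.Quotient.mkₐ ℂ I (∑ i, c i • m i) from rfl, map_sum]
      simp only [map_smul]
    rw [this]
    exact hc
  have h3 := congrFun (ψ_vanish _ h) j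
  simp only [map_sum, map_smul, ψ_m, Finset.sum_apply, Pi.smul_apply, Pi.single_apply,
    smul_eq_mul, mul_ite, mul_one, mul_zero, Pi.zero_apply, Finset.sum_ite_eq,
    Finset.mem_univ, if_true] at h3
  simpa using h3

lemma mem_I_1 : (X 0 : R) ^ 2 + X 1 ^ 2 ∈ I := Ideal.subset_span (by simp)
lemma mem_I_2 : (X 0 : R) ^ 3 ∈ I := Ideal.subset_span (by simp)
lemma mem_I_3 : (X 0 : R) ^ 2 * X 1 ∈ I := Ideal.subset_span (by simp)

lemma mem_I_xy2 : (X 0 : R) * X 1 ^ 2 ∈ I := by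
  have : (X 0 : R) * X 1 ^ 2 = X 0 * (X 0 ^ 2 + X 1 ^ 2) - X 0 ^ 3 := by ring
  rw [this]
  exact sub_mem (Ideal.mul_mem_left _ _ mem_I_1) mem_I_2

lemma mem_I_y3 : (X 1 : R) ^ 3 ∈ I := by
  have : (X 1 : R) ^ 3 = X 1 * (X 0 ^ 2 + X 1 ^ 2) - X 0 ^ 2 * X 1 := by ring
  rw [this]
  exact sub_mem (Ideal.mul_mem_left _ _ mem_I_1) mem_I_3

lemma m_eq : m 0 = 1 ∧ m 1 = X 0 ∧ m 2 = X 1 ∧ m 3 = X 0 * X 1 ∧ m 4 = X 1 ^ 2 := by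
  refine ⟨?_, ?_, ?_, ?_, ?_⟩
  · simp [m, e, monomial_zero']
  · simp [m, e, X]
  · simp [m, e, X]
  · simp [m, e, X, monomial_mul]
  · rw [show m 4 = monomial (Finsupp.single 1 2) 1 from rfl, ← X_pow_eq_monomial]

lemma mulX_mem (n : Fin 2) :
    ∀ q ∈ Submodule.span ℂ (Set.range bb), (Ideal.Quotient.mkₐ ℂ I (X n)) * q ∈
      Submodule.span ℂ (Set.range bb) := by
  obtain ⟨h0, h1, h2, h3, h4⟩ := m_eq
  intro q hq
  induction hq using Submodule.span_induction with
  | mem x hx =>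
    obtain ⟨j, rfl⟩ := hx
    simp only [bb]
    rw [← map_mul]
    have hmem : ∀ j' : Fin 5, Ideal.Quotient.mkₐ ℂ I (m j') ∈
        Submodule.span ℂ (Set.range bb) := fun j' => Submodule.subset_span ⟨j', rfl⟩
    have key : ∀ (n : Fin 2) (j : Fin 5), (Ideal.Quotient.mkₐ ℂ I) (X n * m j) ∈
        Submodule.span ℂ (Set.range bb) := by
      intro n j
      fin_cases n <;> fin_cases j
      · show (Ideal.Quotient.mkₐ ℂ I) ((X (0 : Fin 2) : R) * m 0) ∈ Submodule.span ℂ (Set.range bb)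
        rw [show (X (0 : Fin 2) : R) * m 0 = m 1 by rw [h0, h1, mul_one]]; exact hmem 1
      · show (Ideal.Quotient.mkₐ ℂ I) ((X (0 : Fin 2) : R) * m 1) ∈ Submodule.span ℂ (Set.range bb)
        have hz : (Ideal.Quotient.mkₐ ℂ I) ((X (0 : Fin 2) : R) * m 1 + m 4) = 0 := by
          rw [Ideal.Quotient.mkₐ_eq_mk, Ideal.Quotient.eq_zero_iff_mem, h1, h4]
          have : (X (0 : Fin 2) : R) * X 0 + X 1 ^ 2 = X 0 ^ 2 + X 1 ^ 2 := by ring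
          rw [this]; exact mem_I_1
        rw [map_add] at hz
        rw [eq_neg_of_add_eq_zero_left hz]
        exact neg_mem (hmem 4)
      · show (Ideal.Quotient.mkₐ ℂ I) ((X (0 : Fin 2) : R) * m 2) ∈ Submodule.span ℂ (Set.range bb)
        rw [show (X (0 : Fin 2) : R) * m 2 = m 3 by rw [h2, h3]]; exact hmem 3
      · show (Ideal.Quotient.mkₐ ℂ I) ((X (0 : Fin 2) : R) * m 3) ∈ Submodule.span ℂ (Set.range bb)
        have hz : (Ideal.Quotient.mkₐ ℂ I) ((X (0 : Fin 2) : R) * m 3) = 0 := by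
          rw [Ideal.Quotient.mkₐ_eq_mk, Ideal.Quotient.eq_zero_iff_mem, h3]
          have : (X (0 : Fin 2) : R) * (X 0 * X 1) = X 0 ^ 2 * X 1 := by ring
          rw [this]; exact mem_I_3
        rw [hz]; exact zero_mem _
      · show (Ideal.Quotient.mkₐ ℂ I) ((X (0 : Fin 2) : R) * m 4) ∈ Submodule.span ℂ (Set.range bb)
        have hz : (Ideal.Quotient.mkₐ ℂ I) ((X (0 : Fin 2) : R) * m 4) = 0 := by
          rw [Ideal.Quotient.mkₐ_eq_mk, Ideal.Quotient.eq_zero_iff_mem, h4]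
          exact mem_I_xy2
        rw [hz]; exact zero_mem _
      · show (Ideal.Quotient.mkₐ ℂ I) ((X (1 : Fin 2) : R) * m 0) ∈ Submodule.span ℂ (Set.range bb)
        rw [show (X (1 : Fin 2) : R) * m 0 = m 2 by rw [h0, h2, mul_one]]; exact hmem 2
      · show (Ideal.Quotient.mkₐ ℂ I) ((X (1 : Fin 2) : R) * m 1) ∈ Submodule.span ℂ (Set.range bb)
        rw [show (X (1 : Fin 2) : R) * m 1 = m 3 by rw [h1, h3, mul_comm]]; exact hmem 3
      · show (Ideal.Quotient.mkₐ ℂ I) ((X (1 : Fin 2) : R) * m 2) ∈ Submodule.span ℂ (Set.range bb)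
        rw [show (X (1 : Fin 2) : R) * m 2 = m 4 by rw [h2, h4]; ring]; exact hmem 4
      · show (Ideal.Quotient.mkₐ ℂ I) ((X (1 : Fin 2) : R) * m 3) ∈ Submodule.span ℂ (Set.range bb)
        have hz : (Ideal.Quotient.mkₐ ℂ I) ((X (1 : Fin 2) : R) * m 3) = 0 := by
          rw [Ideal.Quotient.mkₐ_eq_mk, Ideal.Quotient.eq_zero_iff_mem, h3]
          have : (X (1 : Fin 2) : R) * (X 0 * X 1) = X 0 * X 1 ^ 2 := by ring
          rw [this]; exact mem_I_xy2
        rw [hz]; exact zero_mem _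
      · show (Ideal.Quotient.mkₐ ℂ I) ((X (1 : Fin 2) : R) * m 4) ∈ Submodule.span ℂ (Set.range bb)
        have hz : (Ideal.Quotient.mkₐ ℂ I) ((X (1 : Fin 2) : R) * m 4) = 0 := by
          rw [Ideal.Quotient.mkₐ_eq_mk, Ideal.Quotient.eq_zero_iff_mem, h4]
          have : (X (1 : Fin 2) : R) * X 1 ^ 2 = X 1 ^ 3 := by ring
          rw [this]; exact mem_I_y3
        rw [hz]; exact zero_mem _
    exact key n j
  | zero => rw [mul_zero]; exact zero_mem _
  | add x y _ _ hx hy => rw [mul_add]; exact add_mem hx hy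
  | smul c x _ hx => rw [mul_smul_comm]; exact Submodule.smul_mem _ _ hx

lemma bb_span : Submodule.span ℂ (Set.range bb) = ⊤ := by
  rw [eq_top_iff]
  rintro q -
  obtain ⟨p, rfl⟩ := Ideal.Quotient.mkₐ_surjective ℂ I q
  induction p using MvPolynomial.induction_on with
  | C a =>
    have : Ideal.Quotient.mkₐ ℂ I (C a) = a • Ideal.Quotient.mkₐ ℂ I (m 0) := by
      rw [m_eq.1, ← map_smul]
      congr 1
      rw [smul_eq_C_mul, mul_one]
    rw [this]
    exact Submodule.smul_mem _ _ (Submodule.subset_span ⟨0, rfl⟩)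
  | add p q hp hq => rw [map_add]; exact add_mem hp hq
  | mul_X p n hp =>
    rw [mul_comm, map_mul]
    exact mulX_mem n _ hp

noncomputable def bbasis : Module.Basis (Fin 5) ℂ (R ⧸ I) := Module.Basis.mk bb_li (le_of_eq bb_span.symm)

end

end Aux13

open Aux13 in
theorem stmt_13 :
    Module.finrank ℂ
      (MvPolynomial (Fin 2) ℂ ⧸
        (Ideal.span {(X 0 : MvPolynomial (Fin 2) ℂ) ^ 2 + X 1 ^ 2, X 0 ^ 3, X 0 ^ 2 * X 1} :
          Ideal (MvPolynomial (Fin 2) ℂ))) = 5 := by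
  have h := Module.finrank_eq_card_basis bbasis
  have h2 : Module.finrank ℂ (R ⧸ I) = 5 := by simpa using h
  exact h2
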